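/- Positivity preserving property of the discrete porosity (boundedness): under the stated assumptions, the sequence (Ψ_n) produced by the implicit Euler porosity scheme satisfies φ_{0*} ≤ Ψ_n < 1 for every n ≥ 0. -/
import Mathlib


/-- Positivity preserving property of the discrete porosity (boundedness):
the sequence `Ψ` produced by the implicit Euler porosity scheme satisfies
`φ_{0*} ≤ Ψ n < 1` for every `n ≥ 0`. -/
theorem stmt_2 (α kc a0 ρs : ℝ) (hα : 0 < α) (hkc : 0 < kc) (ha0 : 0 < a0)
    (hρs : 0 < ρs)
    (ks : ℝ → ℝ) (hks : ∀ s, 0 < ks s)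
    (Δt : ℝ) (hΔt : 0 < Δt)
    (φlo φhi φ0 : ℝ) (hφlo : 0 < φlo) (hφlohi : φlo ≤ φhi) (hφhi : φhi < 1)
    (hφ0lo : φlo ≤ φ0) (hφ0hi : φ0 ≤ φhi)
    (Z C Ψ : ℕ → ℝ) (hΨ0 : Ψ 0 = φ0)
    (hscheme : ∀ n : ℕ,
      (Ψ (n + 1) - Ψ n) / Δt =
        (α * kc * a0 / ρs) * (1 - 1 / (1 + ks (Z n) / kc))
          * ((1 - Ψ (n + 1)) / (1 - φ0)) * max 0 (min (C n) 1)) :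
    ∀ n : ℕ, φlo ≤ Ψ n ∧ Ψ n < 1 := by
  have hφ01 : φ0 < 1 := lt_of_le_of_lt hφ0hi hφhi
  have hφlo1 : φlo < 1 := lt_of_le_of_lt hφlohi hφhi
  intro n
  induction n with
  | zero => rw [hΨ0]; exact ⟨hφ0lo, hφ01⟩
  | succ n ih =>
    obtain ⟨h1, h2⟩ := ih
    have hE := hscheme n
    set D : ℝ := Δt * ((α * kc * a0 / ρs) * (1 - 1 / (1 + ks (Z n) / kc))
        * max 0 (min (C n) 1) / (1 - φ0)) with hD
    have hχ : 0 < α * kc * a0 / ρs := by positivity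
    have hk : 0 < ks (Z n) / kc := div_pos (hks (Z n)) hkc
    have hden : (1 : ℝ) < 1 + ks (Z n) / kc := by linarith
    have hfrac : 1 / (1 + ks (Z n) / kc) < 1 := by
      rw [div_lt_one (by linarith)]; exact hden
    have hCb : 0 ≤ max 0 (min (C n) 1) := le_max_left _ _
    have hDnn : 0 ≤ D := by
      apply mul_nonneg hΔt.le
      apply div_nonneg _ (by linarith)
      apply mul_nonneg (mul_nonneg hχ.le (by linarith)) hCb
    have heq : Ψ (n + 1) - Ψ n = D * (1 - Ψ (n + 1)) := by
      rw [div_eq_iff (ne_of_gt hΔt)] at hE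
      rw [hE, hD]; ring
    constructor
    · nlinarith [mul_nonneg hDnn (sub_nonneg.2 hφlo1.le)]
    · nlinarith
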